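/- For the monad C of nonempty finitely generated convex sets of distributions, the multiplication μ : CCX → CX defined by μ(S) = ⋃_{Φ ∈ S} { Σ_{U ∈ supp Φ} Φ(U)·d : d ∈ U } preserves convex union: μ(S₁ ⊕ S₂) = μ(S₁) ⊕ μ(S₂) for all S₁, S₂ ∈ CC(X). -/

import Mathlib

def IsDist {X : Type*} (d : X →₀ ℝ) : Prop :=
  (∀ x, 0 ≤ d x) ∧ d.sum (fun _ v => v) = 1

def InC {X : Type*} (S : Set (X →₀ ℝ)) : Prop :=
  S.Nonempty ∧ (∀ d ∈ S, IsDist d) ∧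
    ∃ F : Finset (X →₀ ℝ), S = convexHull ℝ (F : Set (X →₀ ℝ))

/-- A distribution over `C(X)`: a finitely supported distribution on `Set (X →₀ ℝ)`
whose support consists of elements of `C(X)`. -/
def IsDistC {X : Type*} (Φ : Set (X →₀ ℝ) →₀ ℝ) : Prop :=
  IsDist Φ ∧ ∀ U ∈ Φ.support, InC U

/-- `S ∈ CC(X)`: a nonempty finitely generated convex set of distributions over `C(X)`. -/
def InCC {X : Type*} (S : Set (Set (X →₀ ℝ) →₀ ℝ)) : Prop :=
  S.Nonempty ∧ (∀ Φ ∈ S, IsDistC Φ) ∧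
    ∃ F : Finset (Set (X →₀ ℝ) →₀ ℝ), S = convexHull ℝ (F : Set (Set (X →₀ ℝ) →₀ ℝ))

/-- The multiplication `μ : CCX → CX`:
`μ(S) = ⋃_{Φ ∈ S} { Σ_{U ∈ supp Φ} Φ(U)·d : d ∈ U }`. -/
def mu {X : Type*} (S : Set (Set (X →₀ ℝ) →₀ ℝ)) : Set (X →₀ ℝ) :=
  ⋃ Φ ∈ S, {d | ∃ g : Set (X →₀ ℝ) → (X →₀ ℝ),
    (∀ U ∈ Φ.support, g U ∈ U) ∧ d = ∑ U ∈ Φ.support, Φ U • g U}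

/-! ### Auxiliary lemmas -/

lemma isDist_smul_add {X : Type*} {Φ Ψ : X →₀ ℝ} (hΦ : IsDist Φ) (hΨ : IsDist Ψ)
    {a b : ℝ} (ha : 0 ≤ a) (hb : 0 ≤ b) (hab : a + b = 1) : IsDist (a • Φ + b • Ψ) := by
  constructor
  · intro x
    simp only [Finsupp.add_apply, Finsupp.smul_apply, smul_eq_mul]
    exact add_nonneg (mul_nonneg ha (hΦ.1 x)) (mul_nonneg hb (hΨ.1 x))
  · rw [Finsupp.sum_add_index' (fun _ => rfl) (fun _ _ _ => rfl),
        Finsupp.sum_smul_index (fun _ => rfl), Finsupp.sum_smul_index (fun _ => rfl),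
        ← Finsupp.mul_sum, ← Finsupp.mul_sum, hΦ.2, hΨ.2, mul_one, mul_one, hab]

lemma isDistC_smul_add {X : Type*} {Φ Ψ : Set (X →₀ ℝ) →₀ ℝ} (hΦ : IsDistC Φ) (hΨ : IsDistC Ψ)
    {a b : ℝ} (ha : 0 ≤ a) (hb : 0 ≤ b) (hab : a + b = 1) : IsDistC (a • Φ + b • Ψ) := by
  refine ⟨isDist_smul_add hΦ.1 hΨ.1 ha hb hab, fun U hU => ?_⟩
  classical
  have h1 : U ∈ (a • Φ).support ∪ (b • Ψ).support := Finsupp.support_add hU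
  rcases Finset.mem_union.1 h1 with h | h
  · exact hΦ.2 U (Finsupp.support_smul h)
  · exact hΨ.2 U (Finsupp.support_smul h)

lemma isDistC_convex {X : Type*} : Convex ℝ {Φ : Set (X →₀ ℝ) →₀ ℝ | IsDistC Φ} :=
  fun _ hΦ _ hΨ _ _ ha hb hab => isDistC_smul_add hΦ hΨ ha hb hab

lemma sum_restrict {X M : Type*} [AddCommMonoid M] [Module ℝ M] (Ψ : Set (X →₀ ℝ) →₀ ℝ)
    {T : Finset (Set (X →₀ ℝ))} (hT : Ψ.support ⊆ T) (f : Set (X →₀ ℝ) → M) :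
    ∑ U ∈ T, Ψ U • f U = ∑ U ∈ Ψ.support, Ψ U • f U :=
  (Finset.sum_subset hT (fun U _ hU => by
    rw [Finsupp.notMem_support_iff.1 hU, zero_smul])).symm

lemma support_subset_comb {X : Type*} {Φ₁ Φ₂ : Set (X →₀ ℝ) →₀ ℝ}
    (h1 : ∀ U, 0 ≤ Φ₁ U) (h2 : ∀ U, 0 ≤ Φ₂ U) {a b : ℝ} (ha : 0 < a) (hb : 0 ≤ b) :
    Φ₁.support ⊆ (a • Φ₁ + b • Φ₂).support := by
  intro U hU
  rw [Finsupp.mem_support_iff] at hU ⊢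
  simp only [Finsupp.add_apply, Finsupp.smul_apply, smul_eq_mul]
  have hpos : 0 < a * Φ₁ U + b * Φ₂ U := by
    have h := (h1 U).lt_of_ne (Ne.symm hU)
    nlinarith [h2 U]
  exact hpos.ne'

lemma mem_mu_iff {X : Type*} {S : Set (Set (X →₀ ℝ) →₀ ℝ)} {d : X →₀ ℝ} :
    d ∈ mu S ↔ ∃ Φ ∈ S, ∃ g : Set (X →₀ ℝ) → (X →₀ ℝ),
      (∀ U ∈ Φ.support, g U ∈ U) ∧ d = ∑ U ∈ Φ.support, Φ U • g U := by
  simp [mu]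

lemma mu_convex {X : Type*} {S : Set (Set (X →₀ ℝ) →₀ ℝ)} (hS : Convex ℝ S)
    (hd : ∀ Φ ∈ S, IsDistC Φ) : Convex ℝ (mu S) := by
  rintro d₁ hd₁ d₂ hd₂ a b ha hb hab
  rcases eq_or_lt_of_le ha with rfl | ha'
  · rw [zero_add] at hab; subst hab; simpa using hd₂
  rcases eq_or_lt_of_le hb with rfl | hb'
  · rw [add_zero] at hab; subst hab; simpa using hd₁
  obtain ⟨Φ₁, hΦ₁S, g₁, hg₁, rfl⟩ := mem_mu_iff.1 hd₁
  obtain ⟨Φ₂, hΦ₂S, g₂, hg₂, rfl⟩ := mem_mu_iff.1 hd₂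
  set Φ : Set (X →₀ ℝ) →₀ ℝ := a • Φ₁ + b • Φ₂ with hΦdef
  have hΦS : Φ ∈ S := hS hΦ₁S hΦ₂S ha hb hab
  have hn1 := (hd Φ₁ hΦ₁S).1.1
  have hn2 := (hd Φ₂ hΦ₂S).1.1
  have hΦval : ∀ U, Φ U = a * Φ₁ U + b * Φ₂ U := by
    intro U; simp [hΦdef, Finsupp.add_apply, Finsupp.smul_apply]
  set g : Set (X →₀ ℝ) → (X →₀ ℝ) :=
    fun U => ((a * Φ₁ U) / Φ U) • g₁ U + ((b * Φ₂ U) / Φ U) • g₂ U with hgdef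
  refine mem_mu_iff.2 ⟨Φ, hΦS, g, ?_, ?_⟩
  · -- membership
    intro U hU
    have hUne : Φ U ≠ 0 := Finsupp.mem_support_iff.1 hU
    have hgU : g U = ((a * Φ₁ U) / Φ U) • g₁ U + ((b * Φ₂ U) / Φ U) • g₂ U := rfl
    by_cases h1 : Φ₁ U = 0
    · have hΦ₂ne : Φ₂ U ≠ 0 := by
        intro h; exact hUne (by rw [hΦval U, h1, h]; ring)
      have : g U = g₂ U := by
        rw [hgU, h1, mul_zero, zero_div, zero_smul, zero_add, hΦval U, h1, mul_zero, zero_add,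
          div_self (mul_ne_zero hb'.ne' hΦ₂ne), one_smul]
      rw [this]
      exact hg₂ U (Finsupp.mem_support_iff.2 hΦ₂ne)
    · by_cases h2 : Φ₂ U = 0
      · have : g U = g₁ U := by
          rw [hgU, h2, mul_zero, zero_div, zero_smul, add_zero, hΦval U, h2, mul_zero, add_zero,
            div_self (mul_ne_zero ha'.ne' h1), one_smul]
        rw [this]
        exact hg₁ U (Finsupp.mem_support_iff.2 h1)
      · obtain ⟨_, _, F, hF⟩ := (hd Φ hΦS).2 U hU
        have hconv : Convex ℝ U := hF ▸ convex_convexHull ℝ _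
        have hUpos : 0 < Φ U := by
          rcases (hΦval U ▸ add_nonneg (mul_nonneg ha (hn1 U)) (mul_nonneg hb (hn2 U)) :
            (0:ℝ) ≤ Φ U).lt_or_eq with h | h
          · exact h
          · exact absurd h.symm hUne
        exact hconv (hg₁ U (Finsupp.mem_support_iff.2 h1)) (hg₂ U (Finsupp.mem_support_iff.2 h2))
          (div_nonneg (mul_nonneg ha (hn1 U)) hUpos.le)
          (div_nonneg (mul_nonneg hb (hn2 U)) hUpos.le)
          (by rw [← add_div, ← hΦval U, div_self hUne])
  · -- sum identity
    have hs1 : Φ₁.support ⊆ Φ.support := support_subset_comb hn1 hn2 ha' hb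
    have hs2 : Φ₂.support ⊆ Φ.support := by
      have hcomm : b • Φ₂ + a • Φ₁ = Φ := by rw [hΦdef, add_comm]
      exact hcomm ▸ support_subset_comb hn2 hn1 hb' ha
    calc a • ∑ U ∈ Φ₁.support, Φ₁ U • g₁ U + b • ∑ U ∈ Φ₂.support, Φ₂ U • g₂ U
        = ∑ U ∈ Φ.support, a • (Φ₁ U • g₁ U) + ∑ U ∈ Φ.support, b • (Φ₂ U • g₂ U) := by
          rw [← sum_restrict Φ₁ hs1 g₁, ← sum_restrict Φ₂ hs2 g₂, Finset.smul_sum, Finset.smul_sum]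
      _ = ∑ U ∈ Φ.support, ((a * Φ₁ U) • g₁ U + (b * Φ₂ U) • g₂ U) := by
          rw [← Finset.sum_add_distrib]
          exact Finset.sum_congr rfl (fun U _ => by rw [smul_smul, smul_smul])
      _ = ∑ U ∈ Φ.support, Φ U • g U := by
          refine Finset.sum_congr rfl (fun U hU => ?_)
          have hUne : Φ U ≠ 0 := Finsupp.mem_support_iff.1 hU
          rw [hgdef]
          simp only
          rw [smul_add, smul_smul, smul_smul, mul_comm (Φ U), mul_comm (Φ U),
            div_mul_cancel₀ _ hUne, div_mul_cancel₀ _ hUne]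

lemma mu_mono {X : Type*} {S T : Set (Set (X →₀ ℝ) →₀ ℝ)} (h : S ⊆ T) : mu S ⊆ mu T := by
  intro d hd
  obtain ⟨Φ, hΦ, hg⟩ := mem_mu_iff.1 hd
  exact mem_mu_iff.2 ⟨Φ, h hΦ, hg⟩

/-- `μ` preserves convex union: `μ(S₁ ⊕ S₂) = μ(S₁) ⊕ μ(S₂)`. -/
theorem mu_oplus {X : Type*} (S₁ S₂ : Set (Set (X →₀ ℝ) →₀ ℝ))
    (h₁ : InCC S₁) (h₂ : InCC S₂) :
    mu (convexHull ℝ (S₁ ∪ S₂)) = convexHull ℝ (mu S₁ ∪ mu S₂) := by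
  obtain ⟨hne₁, hdc₁, F₁, hF₁⟩ := h₁
  obtain ⟨hne₂, hdc₂, F₂, hF₂⟩ := h₂
  have hcv₁ : Convex ℝ S₁ := hF₁ ▸ convex_convexHull ℝ _
  have hcv₂ : Convex ℝ S₂ := hF₂ ▸ convex_convexHull ℝ _
  have hdcU : ∀ Φ ∈ convexHull ℝ (S₁ ∪ S₂), IsDistC Φ := by
    intro Φ hΦ
    exact convexHull_min (Set.union_subset hdc₁ hdc₂) isDistC_convex hΦ
  apply Set.Subset.antisymm
  · -- ⊆
    intro d hd
    obtain ⟨Φ, hΦ, g, hg, rfl⟩ := mem_mu_iff.1 hd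
    rw [hcv₁.convexHull_union hcv₂ hne₁ hne₂, mem_convexJoin] at hΦ
    obtain ⟨Ψ₁, hΨ₁, Ψ₂, hΨ₂, a, b, ha, hb, hab, rfl⟩ := hΦ
    have hn1 := (hdc₁ Ψ₁ hΨ₁).1.1
    have hn2 := (hdc₂ Ψ₂ hΨ₂).1.1
    rcases eq_or_lt_of_le ha with rfl | ha'
    · rw [zero_add] at hab; subst hab
      rw [zero_smul, zero_add, one_smul] at hg ⊢
      exact subset_convexHull ℝ _ (Set.mem_union_right _ (mem_mu_iff.2 ⟨Ψ₂, hΨ₂, g, hg, rfl⟩))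
    rcases eq_or_lt_of_le hb with rfl | hb'
    · rw [add_zero] at hab; subst hab
      rw [zero_smul, add_zero, one_smul] at hg ⊢
      exact subset_convexHull ℝ _ (Set.mem_union_left _ (mem_mu_iff.2 ⟨Ψ₁, hΨ₁, g, hg, rfl⟩))
    have hs1 : Ψ₁.support ⊆ (a • Ψ₁ + b • Ψ₂).support := support_subset_comb hn1 hn2 ha' hb
    have hs2 : Ψ₂.support ⊆ (a • Ψ₁ + b • Ψ₂).support := by
      have hcomm : b • Ψ₂ + a • Ψ₁ = a • Ψ₁ + b • Ψ₂ := add_comm _ _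
      exact hcomm ▸ support_subset_comb hn2 hn1 hb' ha
    have hd₁ : (∑ U ∈ Ψ₁.support, Ψ₁ U • g U) ∈ mu S₁ :=
      mem_mu_iff.2 ⟨Ψ₁, hΨ₁, g, fun U hU => hg U (hs1 hU), rfl⟩
    have hd₂ : (∑ U ∈ Ψ₂.support, Ψ₂ U • g U) ∈ mu S₂ :=
      mem_mu_iff.2 ⟨Ψ₂, hΨ₂, g, fun U hU => hg U (hs2 hU), rfl⟩
    have hsum : ∑ U ∈ (a • Ψ₁ + b • Ψ₂).support, (a • Ψ₁ + b • Ψ₂) U • g U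
        = a • ∑ U ∈ Ψ₁.support, Ψ₁ U • g U + b • ∑ U ∈ Ψ₂.support, Ψ₂ U • g U := by
      calc ∑ U ∈ (a • Ψ₁ + b • Ψ₂).support, (a • Ψ₁ + b • Ψ₂) U • g U
          = ∑ U ∈ (a • Ψ₁ + b • Ψ₂).support, (a • (Ψ₁ U • g U) + b • (Ψ₂ U • g U)) := by
            refine Finset.sum_congr rfl (fun U _ => ?_)
            rw [Finsupp.add_apply, Finsupp.smul_apply, Finsupp.smul_apply, smul_eq_mul,
              smul_eq_mul, add_smul, mul_smul, mul_smul]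
        _ = a • ∑ U ∈ Ψ₁.support, Ψ₁ U • g U + b • ∑ U ∈ Ψ₂.support, Ψ₂ U • g U := by
            rw [Finset.sum_add_distrib, ← Finset.smul_sum, ← Finset.smul_sum,
              sum_restrict Ψ₁ hs1 g, sum_restrict Ψ₂ hs2 g]
    rw [hsum]
    exact convex_convexHull ℝ _ (subset_convexHull ℝ _ (Set.mem_union_left _ hd₁))
      (subset_convexHull ℝ _ (Set.mem_union_right _ hd₂)) ha hb hab
  · -- ⊇
    refine convexHull_min (Set.union_subset ?_ ?_)
      (mu_convex (convex_convexHull ℝ _) hdcU)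
    · exact mu_mono (fun Φ hΦ => subset_convexHull ℝ _ (Set.mem_union_left _ hΦ))
    · exact mu_mono (fun Φ hΦ => subset_convexHull ℝ _ (Set.mem_union_right _ hΦ))
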